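/- If H' is a unimodular almost cocommutative FH-algebra over a commutative ring k, then H' is a symmetric algebra, i.e. it admits a Frobenius homomorphism that is a trace. -/

import Mathlib

open TensorProduct

/-- `(φ, x, y)` is a Frobenius system for the `k`-algebra `A`. -/
def IsFrobeniusSystem (k : Type*) [CommRing k] (A : Type*) [Ring A] [Algebra k A]
    (φ : A →ₗ[k] k) {n : ℕ} (x y : Fin n → A) : Prop :=
  ∀ a : A, (∑ i, φ (y i * a) • x i = a) ∧ (∑ i, φ (a * x i) • y i = a)

namespace Stmt19Aux

open Coalgebra HopfAlgebra

noncomputable section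

variable {k : Type*} [CommRing k] {H : Type*} [Ring H] [HopfAlgebra k H]

/-- A representation of `comul (a*b)` built from representations of `comul a`, `comul b`. -/
def mulRepr {a b : H} {ι₁ ι₂ : Type*} (ra : Coalgebra.Repr k a ι₁) (rb : Coalgebra.Repr k b ι₂) :
    Coalgebra.Repr k (a * b) (ι₁ × ι₂) where
  index := ra.index ×ˢ rb.index
  left := fun p => ra.left p.1 * rb.left p.2
  right := fun p => ra.right p.1 * rb.right p.2
  eq := by
    rw [Bialgebra.comul_mul, ← ra.eq, ← rb.eq, Finset.sum_mul_sum, Finset.sum_product]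
    simp [Algebra.TensorProduct.tmul_mul_tmul]

lemma sum_counit_smul_right {a : H} {ι : Type*} (ra : Coalgebra.Repr k a ι) :
    ∑ i ∈ ra.index, Coalgebra.counit (R := k) (ra.left i) • ra.right i = a := by
  have h := congrArg (TensorProduct.lid k H) (Coalgebra.sum_counit_tmul_eq ra)
  rw [map_sum] at h
  simp only [lid_tmul] at h
  rw [h]; simp

lemma sum_counit_smul_left {a : H} {ι : Type*} (ra : Coalgebra.Repr k a ι) :
    ∑ i ∈ ra.index, Coalgebra.counit (R := k) (ra.right i) • ra.left i = a := by
  have h := congrArg (TensorProduct.rid k H) (Coalgebra.sum_tmul_counit_eq ra)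
  rw [map_sum] at h
  simp only [rid_tmul] at h
  rw [h]; simp

lemma sum4_swap {J I : Type*} {M : J → Type*} {L : I → Type*}
    (sj : Finset J) (sm : ∀ j, Finset (M j)) (si : Finset I) (sl : ∀ i, Finset (L i))
    {N : Type*} [AddCommMonoid N] (F : ∀ (j : J), M j → ∀ (i : I), L i → N) :
    (∑ j ∈ sj, ∑ m ∈ sm j, ∑ i ∈ si, ∑ l ∈ sl i, F j m i l)
      = ∑ i ∈ si, ∑ l ∈ sl i, ∑ j ∈ sj, ∑ m ∈ sm j, F j m i l := by
  calc (∑ j ∈ sj, ∑ m ∈ sm j, ∑ i ∈ si, ∑ l ∈ sl i, F j m i l)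
      = ∑ p ∈ sj.sigma sm, ∑ q ∈ si.sigma sl, F p.1 p.2 q.1 q.2 := by
        rw [Finset.sum_sigma]
        exact Finset.sum_congr rfl fun j _ => Finset.sum_congr rfl fun m _ => by
          rw [Finset.sum_sigma]
    _ = ∑ q ∈ si.sigma sl, ∑ p ∈ sj.sigma sm, F p.1 p.2 q.1 q.2 := Finset.sum_comm
    _ = ∑ i ∈ si, ∑ l ∈ sl i, ∑ j ∈ sj, ∑ m ∈ sm j, F j m i l := by
        rw [Finset.sum_sigma]
        exact Finset.sum_congr rfl fun i _ => Finset.sum_congr rfl fun l _ => by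
          rw [Finset.sum_sigma]

lemma antipode_one' : antipode (R := k) (1 : H) = 1 := by
  have := HopfAlgebra.mul_antipode_rTensor_comul_apply (R := k) (a := (1 : H))
  simpa [Bialgebra.comul_one, Algebra.TensorProduct.one_def] using this

theorem antipode_mul' (a b : H) :
    antipode (R := k) (a * b) = antipode (R := k) b * antipode (R := k) a := by
  classical
  set S : H →ₗ[k] H := antipode (R := k) with hS
  set ra := Coalgebra.Repr.arbitrary k a
  set rb := Coalgebra.Repr.arbitrary k b
  set rla : ∀ i : ra.ι, Coalgebra.Repr k (ra.left i) (H × H) := fun i => Coalgebra.Repr.arbitrary k _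
  set rra : ∀ i : ra.ι, Coalgebra.Repr k (ra.right i) (H × H) := fun i => Coalgebra.Repr.arbitrary k _
  set rlb : ∀ j : rb.ι, Coalgebra.Repr k (rb.left j) (H × H) := fun j => Coalgebra.Repr.arbitrary k _
  set rrb : ∀ j : rb.ι, Coalgebra.Repr k (rb.right j) (H × H) := fun j => Coalgebra.Repr.arbitrary k _
  have keya := Coalgebra.sum_tmul_tmul_eq ra rla rra
  have keyb := Coalgebra.sum_tmul_tmul_eq rb rlb rrb
  set X : H := ∑ j ∈ rb.index, ∑ m ∈ (rrb j).index, ∑ i ∈ ra.index, ∑ l ∈ (rra i).index,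
    S (ra.left i * rb.left j) *
      ((rra i).left l * (((rrb j).left m * S ((rrb j).right m)) * S ((rra i).right l)))
    with hXdef
  set X' : H := ∑ j ∈ rb.index, ∑ m ∈ (rrb j).index, ∑ i ∈ ra.index, ∑ l ∈ (rla i).index,
    S ((rla i).left l * rb.left j) *
      ((rla i).right l * (((rrb j).left m * S ((rrb j).right m)) * S (ra.right i)))
    with hX'def
  set X'' : H := ∑ i ∈ ra.index, ∑ l ∈ (rla i).index, ∑ j ∈ rb.index, ∑ m ∈ (rlb j).index,
    S ((rla i).left l * (rlb j).left m) *
      ((rla i).right l * (((rlb j).right m * S (rb.right j)) * S (ra.right i)))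
    with hX''def
  have hXX' : X = X' := by
    rw [hXdef, hX'def]
    refine Finset.sum_congr rfl fun j _ => Finset.sum_congr rfl fun m _ => ?_
    set w : H := (rrb j).left m * S ((rrb j).right m) with hw
    set χ : H ⊗[k] (H ⊗[k] H) →ₗ[k] H :=
      LinearMap.mul' k H ∘ₗ
        TensorProduct.map (S ∘ₗ LinearMap.mulRight k (rb.left j))
          (LinearMap.mul' k H ∘ₗ
            TensorProduct.map LinearMap.id (LinearMap.mulLeft k w ∘ₗ S)) with hχ
    have hχap : ∀ p q r : H, χ (p ⊗ₜ[k] (q ⊗ₜ[k] r))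
        = S (p * rb.left j) * (q * (w * S r)) := by
      intro p q r
      simp [hχ]
    have h := congrArg χ keya
    rw [map_sum, map_sum] at h
    simp only [map_sum, hχap] at h
    exact h.symm
  have hX'X'' : X' = X'' := by
    rw [hX'def, hX''def,
      sum4_swap rb.index (fun j => (rrb j).index) ra.index (fun i => (rla i).index)]
    refine Finset.sum_congr rfl fun i _ => Finset.sum_congr rfl fun l _ => ?_
    set χ : H ⊗[k] (H ⊗[k] H) →ₗ[k] H :=
      LinearMap.mul' k H ∘ₗ
        TensorProduct.map (S ∘ₗ LinearMap.mulLeft k ((rla i).left l))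
          (LinearMap.mulLeft k ((rla i).right l) ∘ₗ
            LinearMap.mulRight k (S (ra.right i)) ∘ₗ
            LinearMap.mul' k H ∘ₗ TensorProduct.map LinearMap.id S) with hχ
    have hχap : ∀ p q r : H, χ (p ⊗ₜ[k] (q ⊗ₜ[k] r))
        = S ((rla i).left l * p) * ((rla i).right l * ((q * S r) * S (ra.right i))) := by
      intro p q r
      simp [hχ, mul_assoc]
    have h := congrArg χ keyb
    rw [map_sum, map_sum] at h
    simp only [map_sum, hχap] at h
    exact h.symm
  have hX1 : X = S (a * b) := by
    rw [hXdef,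
      sum4_swap rb.index (fun j => (rrb j).index) ra.index (fun i => (rra i).index)]
    have inner : ∀ (i : ra.ι) (l : (rra i).ι),
        (∑ j ∈ rb.index, ∑ m ∈ (rrb j).index,
          S (ra.left i * rb.left j) *
            ((rra i).left l * (((rrb j).left m * S ((rrb j).right m)) * S ((rra i).right l))))
        = S (ra.left i * b) * ((rra i).left l * S ((rra i).right l)) := by
      intro i l
      have perj : ∀ j : rb.ι,
          (∑ m ∈ (rrb j).index,
            S (ra.left i * rb.left j) *
              ((rra i).left l * (((rrb j).left m * S ((rrb j).right m)) * S ((rra i).right l))))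
          = Coalgebra.counit (R := k) (rb.right j) •
              (S (ra.left i * rb.left j) * ((rra i).left l * S ((rra i).right l))) := by
        intro j
        rw [← Finset.mul_sum, ← Finset.mul_sum, ← Finset.sum_mul,
          HopfAlgebra.sum_mul_antipode_eq_smul (rrb j)]
        rw [smul_mul_assoc, one_mul, mul_smul_comm, mul_smul_comm]
      rw [Finset.sum_congr rfl fun j _ => perj j]
      have h2 : ∀ j : rb.ι, Coalgebra.counit (R := k) (rb.right j) •
              (S (ra.left i * rb.left j) * ((rra i).left l * S ((rra i).right l)))
          = (Coalgebra.counit (R := k) (rb.right j) • S (ra.left i * rb.left j)) *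
              ((rra i).left l * S ((rra i).right l)) := by
        intro j; rw [smul_mul_assoc]
      rw [Finset.sum_congr rfl fun j _ => h2 j, ← Finset.sum_mul]
      congr 1
      have h3 : ∀ j : rb.ι, Coalgebra.counit (R := k) (rb.right j) • S (ra.left i * rb.left j)
          = S (ra.left i * (Coalgebra.counit (R := k) (rb.right j) • rb.left j)) := by
        intro j; rw [mul_smul_comm, map_smul]
      rw [Finset.sum_congr rfl fun j _ => h3 j, ← map_sum, ← Finset.mul_sum,
        sum_counit_smul_left rb]
    rw [Finset.sum_congr rfl fun i _ => Finset.sum_congr rfl fun l _ => inner i l]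
    have peri : ∀ i : ra.ι,
        (∑ l ∈ (rra i).index, S (ra.left i * b) * ((rra i).left l * S ((rra i).right l)))
        = Coalgebra.counit (R := k) (ra.right i) • S (ra.left i * b) := by
      intro i
      rw [← Finset.mul_sum, HopfAlgebra.sum_mul_antipode_eq_smul (rra i),
        mul_smul_comm, mul_one]
    rw [Finset.sum_congr rfl fun i _ => peri i]
    have h4 : ∀ i : ra.ι, Coalgebra.counit (R := k) (ra.right i) • S (ra.left i * b)
        = S ((Coalgebra.counit (R := k) (ra.right i) • ra.left i) * b) := by
      intro i; rw [smul_mul_assoc, map_smul]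
    rw [Finset.sum_congr rfl fun i _ => h4 i, ← map_sum, ← Finset.sum_mul,
      sum_counit_smul_left ra]
  have hX2 : X'' = S b * S a := by
    rw [hX''def]
    have reorder : ∀ i : ra.ι,
        (∑ l ∈ (rla i).index, ∑ j ∈ rb.index, ∑ m ∈ (rlb j).index,
          S ((rla i).left l * (rlb j).left m) *
            ((rla i).right l * (((rlb j).right m * S (rb.right j)) * S (ra.right i))))
        = ∑ j ∈ rb.index, ∑ l ∈ (rla i).index, ∑ m ∈ (rlb j).index,
          S ((rla i).left l * (rlb j).left m) *
            ((rla i).right l * (((rlb j).right m * S (rb.right j)) * S (ra.right i))) :=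
      fun i => Finset.sum_comm
    rw [Finset.sum_congr rfl fun i _ => reorder i]
    have perij : ∀ (i : ra.ι) (j : rb.ι),
        (∑ l ∈ (rla i).index, ∑ m ∈ (rlb j).index,
          S ((rla i).left l * (rlb j).left m) *
            ((rla i).right l * (((rlb j).right m * S (rb.right j)) * S (ra.right i))))
        = (Coalgebra.counit (R := k) (ra.left i) * Coalgebra.counit (R := k) (rb.left j)) •
            (S (rb.right j) * S (ra.right i)) := by
      intro i j
      have reassoc : ∀ (l : (rla i).ι) (m : (rlb j).ι),
          S ((rla i).left l * (rlb j).left m) *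
            ((rla i).right l * (((rlb j).right m * S (rb.right j)) * S (ra.right i)))
          = (S ((rla i).left l * (rlb j).left m) * ((rla i).right l * (rlb j).right m)) *
              (S (rb.right j) * S (ra.right i)) := by
        intro l m; simp only [mul_assoc]
      rw [Finset.sum_congr rfl fun l _ => Finset.sum_congr rfl fun m _ => reassoc l m]
      have hax : (∑ l ∈ (rla i).index, ∑ m ∈ (rlb j).index,
          S ((rla i).left l * (rlb j).left m) * ((rla i).right l * (rlb j).right m))
          = Coalgebra.counit (R := k) (ra.left i * rb.left j) • 1 := by
        have h := HopfAlgebra.sum_antipode_mul_eq_smul (R := k) (mulRepr (rla i) (rlb j))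
        rw [← Finset.sum_product']
        exact h
      calc (∑ l ∈ (rla i).index, ∑ m ∈ (rlb j).index,
          (S ((rla i).left l * (rlb j).left m) * ((rla i).right l * (rlb j).right m)) *
            (S (rb.right j) * S (ra.right i)))
          = (∑ l ∈ (rla i).index, ∑ m ∈ (rlb j).index,
              S ((rla i).left l * (rlb j).left m) * ((rla i).right l * (rlb j).right m)) *
                (S (rb.right j) * S (ra.right i)) := by
            rw [Finset.sum_mul]
            exact Finset.sum_congr rfl fun l _ => by rw [Finset.sum_mul]
        _ = (Coalgebra.counit (R := k) (ra.left i * rb.left j) • 1) *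
              (S (rb.right j) * S (ra.right i)) := by rw [hax]
        _ = (Coalgebra.counit (R := k) (ra.left i) * Coalgebra.counit (R := k) (rb.left j)) •
              (S (rb.right j) * S (ra.right i)) := by
            rw [smul_mul_assoc, one_mul, Bialgebra.counit_mul]
    rw [Finset.sum_congr rfl fun i _ => Finset.sum_congr rfl fun j _ => perij i j]
    have peri : ∀ i : ra.ι,
        (∑ j ∈ rb.index,
          (Coalgebra.counit (R := k) (ra.left i) * Coalgebra.counit (R := k) (rb.left j)) •
            (S (rb.right j) * S (ra.right i)))
        = Coalgebra.counit (R := k) (ra.left i) • (S b * S (ra.right i)) := by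
      intro i
      have h5 : ∀ j : rb.ι,
          (Coalgebra.counit (R := k) (ra.left i) * Coalgebra.counit (R := k) (rb.left j)) •
            (S (rb.right j) * S (ra.right i))
          = Coalgebra.counit (R := k) (ra.left i) •
              ((Coalgebra.counit (R := k) (rb.left j) • S (rb.right j)) * S (ra.right i)) := by
        intro j; rw [mul_smul, smul_mul_assoc]
      rw [Finset.sum_congr rfl fun j _ => h5 j, ← Finset.smul_sum, ← Finset.sum_mul]
      congr 2
      simp only [← map_smul]
      rw [← map_sum, sum_counit_smul_right rb]
    rw [Finset.sum_congr rfl fun i _ => peri i]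
    have h6 : ∀ i : ra.ι,
        Coalgebra.counit (R := k) (ra.left i) • (S b * S (ra.right i))
        = S b * S (Coalgebra.counit (R := k) (ra.left i) • ra.right i) := by
      intro i; rw [map_smul, mul_smul_comm]
    rw [Finset.sum_congr rfl fun i _ => h6 i, ← Finset.mul_sum, ← map_sum,
      sum_counit_smul_right ra]
  rw [← hX1, hXX', hX'X'', hX2]

/-- the "(R)-identity": for a right integral `t`,  `Δt ⬝ (c ⊗ 1) = Δt ⬝ (1 ⊗ S c)`. -/
lemma rtR {t : H} (hint : ∀ a : H, t * a = Coalgebra.counit (R := k) a • t) (c : H) :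
    Coalgebra.comul (R := k) t * (c ⊗ₜ[k] 1)
      = Coalgebra.comul (R := k) t * (1 ⊗ₜ[k] antipode (R := k) c) := by
  classical
  set S : H →ₗ[k] H := antipode (R := k) with hS
  set rc := Coalgebra.Repr.arbitrary k c
  set rlc : ∀ i : rc.ι, Coalgebra.Repr k (rc.left i) (H × H) := fun i => Coalgebra.Repr.arbitrary k _
  set rrc : ∀ i : rc.ι, Coalgebra.Repr k (rc.right i) (H × H) := fun i => Coalgebra.Repr.arbitrary k _
  have key := Coalgebra.sum_tmul_tmul_eq rc rlc rrc
  set Λ : H ⊗[k] (H ⊗[k] H) →ₗ[k] H ⊗[k] H :=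
    TensorProduct.map LinearMap.id (LinearMap.mul' k H ∘ₗ TensorProduct.map LinearMap.id S)
    with hΛ
  have hΛap : ∀ p q r : H, Λ (p ⊗ₜ[k] (q ⊗ₜ[k] r)) = p ⊗ₜ[k] (q * S r) := by
    intro p q r; simp [hΛ]
  have h := congrArg Λ key
  rw [map_sum, map_sum] at h
  simp only [map_sum, hΛap] at h
  have hrhs : (∑ i ∈ rc.index, ∑ l ∈ (rrc i).index,
      rc.left i ⊗ₜ[k] ((rrc i).left l * S ((rrc i).right l))) = c ⊗ₜ[k] (1 : H) := by
    have h1 : ∀ i : rc.ι, (∑ l ∈ (rrc i).index,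
        rc.left i ⊗ₜ[k] ((rrc i).left l * S ((rrc i).right l)))
        = Coalgebra.counit (R := k) (rc.right i) • (rc.left i ⊗ₜ[k] (1 : H)) := by
      intro i
      rw [← TensorProduct.tmul_sum, HopfAlgebra.sum_mul_antipode_eq_smul (rrc i),
        TensorProduct.tmul_smul]
    rw [Finset.sum_congr rfl fun i _ => h1 i]
    have h2 : ∀ i : rc.ι, Coalgebra.counit (R := k) (rc.right i) • (rc.left i ⊗ₜ[k] (1 : H))
        = (Coalgebra.counit (R := k) (rc.right i) • rc.left i) ⊗ₜ[k] (1 : H) := by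
      intro i; rw [TensorProduct.smul_tmul']
    rw [Finset.sum_congr rfl fun i _ => h2 i, ← TensorProduct.sum_tmul,
      sum_counit_smul_left rc]
  have I1 : (c ⊗ₜ[k] (1 : H)) = ∑ i ∈ rc.index, ∑ l ∈ (rlc i).index,
      (rlc i).left l ⊗ₜ[k] ((rlc i).right l * S (rc.right i)) := (h.trans hrhs).symm
  rw [I1, Finset.mul_sum]
  rw [Finset.sum_congr rfl fun i _ => Finset.mul_sum _ _ _]
  have peri : ∀ i : rc.ι,
      (∑ l ∈ (rlc i).index, Coalgebra.comul (R := k) t *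
        ((rlc i).left l ⊗ₜ[k] ((rlc i).right l * S (rc.right i))))
      = Coalgebra.counit (R := k) (rc.left i) •
          (Coalgebra.comul (R := k) t * ((1 : H) ⊗ₜ[k] S (rc.right i))) := by
    intro i
    have term : ∀ l : (rlc i).ι,
        (rlc i).left l ⊗ₜ[k] ((rlc i).right l * S (rc.right i))
        = ((rlc i).left l ⊗ₜ[k] (rlc i).right l) * ((1 : H) ⊗ₜ[k] S (rc.right i)) := by
      intro l
      rw [Algebra.TensorProduct.tmul_mul_tmul, mul_one]
    rw [Finset.sum_congr rfl fun l _ => by rw [term l]]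
    rw [← Finset.mul_sum, ← Finset.sum_mul, (rlc i).eq, ← mul_assoc,
      ← Bialgebra.comul_mul, hint (rc.left i), map_smul, smul_mul_assoc]
  rw [Finset.sum_congr rfl fun i _ => peri i]
  have h7 : ∀ i : rc.ι, Coalgebra.counit (R := k) (rc.left i) •
        (Coalgebra.comul (R := k) t * ((1 : H) ⊗ₜ[k] S (rc.right i)))
      = Coalgebra.comul (R := k) t *
          ((1 : H) ⊗ₜ[k] S (Coalgebra.counit (R := k) (rc.left i) • rc.right i)) := by
    intro i
    rw [map_smul, TensorProduct.tmul_smul, mul_smul_comm]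
  rw [Finset.sum_congr rfl fun i _ => h7 i, ← Finset.mul_sum, ← TensorProduct.tmul_sum,
    ← map_sum, sum_counit_smul_right rc]

/-- `theta (p ⊗ q) = S q * p`. -/
def theta : H ⊗[k] H →ₗ[k] H :=
  LinearMap.mul' k H ∘ₗ TensorProduct.map (antipode (R := k)) LinearMap.id ∘ₗ
    (TensorProduct.comm k H H).toLinearMap

lemma theta_tmul (p q : H) : theta (p ⊗ₜ[k] q) = antipode (R := k) q * p := by
  simp [theta]

lemma L1 (X : H ⊗[k] H) (p q : H) :
    theta (X * (p ⊗ₜ[k] q)) = antipode (R := k) q * theta X * p := by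
  induction X using TensorProduct.induction_on with
  | zero => simp
  | tmul P Q =>
      rw [Algebra.TensorProduct.tmul_mul_tmul, theta_tmul, theta_tmul,
        antipode_mul', mul_assoc, mul_assoc, mul_assoc]
  | add X Y hX hY =>
      rw [add_mul, map_add, hX, hY, map_add, mul_add, add_mul]

lemma L3 (x : H) (Y : H ⊗[k] H) :
    theta ((TensorProduct.comm k H H) (Coalgebra.comul (R := k) x) * Y)
      = Coalgebra.counit (R := k) x • theta Y := by
  induction Y using TensorProduct.induction_on with
  | zero => simp
  | tmul P Q =>
      classical
      set rx := Coalgebra.Repr.arbitrary k x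
      rw [← rx.eq, map_sum, Finset.sum_mul, map_sum]
      have h1 : ∀ i : rx.ι,
          theta (((TensorProduct.comm k H H) (rx.left i ⊗ₜ[k] rx.right i)) * (P ⊗ₜ[k] Q))
          = antipode (R := k) Q *
              ((antipode (R := k) (rx.left i) * rx.right i) * P) := by
        intro i
        rw [TensorProduct.comm_tmul, Algebra.TensorProduct.tmul_mul_tmul, theta_tmul,
          antipode_mul', mul_assoc, mul_assoc]
      rw [Finset.sum_congr rfl fun i _ => h1 i, ← Finset.mul_sum, ← Finset.sum_mul,
        HopfAlgebra.sum_antipode_mul_eq_smul rx, smul_mul_assoc, one_mul, mul_smul_comm,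
        theta_tmul]
  | add X Y hX hY =>
      rw [mul_add, map_add, hX, hY, map_add, smul_add]

section withR
variable (R : H ⊗[k] H)

lemma L2' (w : H) {ι : Type*} (rw' : Coalgebra.Repr k w ι) :
    theta (R * Coalgebra.comul (R := k) w)
      = ∑ l ∈ rw'.index, antipode (R := k) (rw'.right l) * theta R * rw'.left l := by
  rw [← rw'.eq, Finset.mul_sum, map_sum]
  exact Finset.sum_congr rfl fun l _ => L1 R _ _

lemma D1' (Rinv : H ⊗[k] H) (hR2 : Rinv * R = 1)
    (hR : ∀ a : H, R * Coalgebra.comul (R := k) a * Rinv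
        = (TensorProduct.comm k H H) (Coalgebra.comul (R := k) a))
    (w : H) {ι : Type*} (rw' : Coalgebra.Repr k w ι) :
    ∑ l ∈ rw'.index, antipode (R := k) (rw'.right l) * theta R * rw'.left l
      = Coalgebra.counit (R := k) w • theta R := by
  rw [← L2' R w rw']
  have hcomm : R * Coalgebra.comul (R := k) w
      = (TensorProduct.comm k H H) (Coalgebra.comul (R := k) w) * R := by
    have := congrArg (· * R) (hR w)
    simpa [mul_assoc, hR2] using this
  rw [hcomm, L3]

lemma ulemma (Rinv : H ⊗[k] H) (hR2 : Rinv * R = 1)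
    (hR : ∀ a : H, R * Coalgebra.comul (R := k) a * Rinv
        = (TensorProduct.comm k H H) (Coalgebra.comul (R := k) a))
    (x : H) :
    theta R * x = antipode (R := k) (antipode (R := k) x) * theta R := by
  classical
  set S : H →ₗ[k] H := antipode (R := k) with hS
  set u : H := theta R with hu
  set rx := Coalgebra.Repr.arbitrary k x
  set rlx : ∀ i : rx.ι, Coalgebra.Repr k (rx.left i) (H × H) := fun i => Coalgebra.Repr.arbitrary k _
  set rrx : ∀ i : rx.ι, Coalgebra.Repr k (rx.right i) (H × H) := fun i => Coalgebra.Repr.arbitrary k _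
  have key := Coalgebra.sum_tmul_tmul_eq rx rlx rrx
  set κ : H ⊗[k] (H ⊗[k] H) →ₗ[k] H :=
    LinearMap.mul' k H ∘ₗ
      TensorProduct.map
        (LinearMap.mulRight k u ∘ₗ S ∘ₗ LinearMap.mul' k H ∘ₗ
          TensorProduct.map LinearMap.id S)
        LinearMap.id ∘ₗ
      (TensorProduct.comm k H (H ⊗[k] H)).toLinearMap with hκ
  have hκap : ∀ p q r : H, κ (p ⊗ₜ[k] (q ⊗ₜ[k] r)) = (S (q * S r) * u) * p := by
    intro p q r; simp [hκ]
  have h := congrArg κ key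
  rw [map_sum, map_sum] at h
  simp only [map_sum, hκap] at h
  have hrhs : (∑ i ∈ rx.index, ∑ l ∈ (rrx i).index,
      (S ((rrx i).left l * S ((rrx i).right l)) * u) * rx.left i) = u * x := by
    have peri : ∀ i : rx.ι, (∑ l ∈ (rrx i).index,
        (S ((rrx i).left l * S ((rrx i).right l)) * u) * rx.left i)
        = Coalgebra.counit (R := k) (rx.right i) • (u * rx.left i) := by
      intro i
      rw [← Finset.sum_mul, ← Finset.sum_mul, ← map_sum,
        HopfAlgebra.sum_mul_antipode_eq_smul (rrx i), map_smul, antipode_one',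
        smul_mul_assoc, one_mul, smul_mul_assoc]
    rw [Finset.sum_congr rfl fun i _ => peri i]
    have h8 : ∀ i : rx.ι, Coalgebra.counit (R := k) (rx.right i) • (u * rx.left i)
        = u * (Coalgebra.counit (R := k) (rx.right i) • rx.left i) := by
      intro i; rw [mul_smul_comm]
    rw [Finset.sum_congr rfl fun i _ => h8 i, ← Finset.mul_sum,
      sum_counit_smul_left rx]
  have hlhs : (∑ i ∈ rx.index, ∑ l ∈ (rlx i).index,
      (S ((rlx i).right l * S (rx.right i)) * u) * (rlx i).left l) = S (S x) * u := by
    have peri : ∀ i : rx.ι, (∑ l ∈ (rlx i).index,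
        (S ((rlx i).right l * S (rx.right i)) * u) * (rlx i).left l)
        = Coalgebra.counit (R := k) (rx.left i) • (S (S (rx.right i)) * u) := by
      intro i
      have term : ∀ l : (rlx i).ι,
          (S ((rlx i).right l * S (rx.right i)) * u) * (rlx i).left l
          = S (S (rx.right i)) * ((S ((rlx i).right l) * u) * (rlx i).left l) := by
        intro l
        rw [show S ((rlx i).right l * S (rx.right i))
            = S (S (rx.right i)) * S ((rlx i).right l) from antipode_mul' _ _]
        simp only [mul_assoc]
      rw [Finset.sum_congr rfl fun l _ => term l, ← Finset.mul_sum,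
        D1' R Rinv hR2 hR (rx.left i) (rlx i), mul_smul_comm]
    rw [Finset.sum_congr rfl fun i _ => peri i]
    have h9 : ∀ i : rx.ι, Coalgebra.counit (R := k) (rx.left i) • (S (S (rx.right i)) * u)
        = (S (S (Coalgebra.counit (R := k) (rx.left i) • rx.right i))) * u := by
      intro i; rw [map_smul, map_smul, smul_mul_assoc]
    rw [Finset.sum_congr rfl fun i _ => h9 i, ← Finset.sum_mul]
    congr 2
    rw [← map_sum, ← map_sum, sum_counit_smul_right rx]
  exact (hrhs.symm.trans h.symm).trans hlhs

end withR

variable (f : H →ₗ[k] k) {nn : ℕ} (x y : Fin nn → H)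

lemma hri_repr
    (hri : ∀ a : H, (TensorProduct.lid k H) ((TensorProduct.map f LinearMap.id)
      (Coalgebra.comul (R := k) a)) = f a • (1 : H))
    {a : H} {ι : Type*} (ra : Coalgebra.Repr k a ι) :
    ∑ i ∈ ra.index, f (ra.left i) • ra.right i = f a • 1 := by
  have h := hri a
  rw [← ra.eq, map_sum, map_sum] at h
  simpa using h

lemma base2
    (hri : ∀ a : H, (TensorProduct.lid k H) ((TensorProduct.map f LinearMap.id)
      (Coalgebra.comul (R := k) a)) = f a • (1 : H))
    {a b : H} {ι₁ ι₂ : Type*} (ra : Coalgebra.Repr k a ι₁) (rb : Coalgebra.Repr k b ι₂) :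
    ∑ i ∈ ra.index, ∑ j ∈ rb.index,
      f (ra.left i * rb.left j) • (ra.right i * rb.right j) = f (a * b) • 1 := by
  have h := hri_repr f hri (mulRepr ra rb)
  rw [← Finset.sum_product']
  exact h

lemma dag4
    (hri : ∀ a : H, (TensorProduct.lid k H) ((TensorProduct.map f LinearMap.id)
      (Coalgebra.comul (R := k) a)) = f a • (1 : H))
    {t : H} (hft : ∀ c : H, f (c * t) = Coalgebra.counit (R := k) c)
    {ι : Type*} (rt : Coalgebra.Repr k t ι) (a : H) :
    ∑ j ∈ rt.index, f (a * rt.left j) • antipode (R := k) (rt.right j) = a := by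
  classical
  set ra := Coalgebra.Repr.arbitrary k a with hra
  set rl : ∀ j : rt.ι, Coalgebra.Repr k (rt.left j) (H × H) :=
    fun j => Coalgebra.Repr.arbitrary k (rt.left j) with hrl
  set rr : ∀ j : rt.ι, Coalgebra.Repr k (rt.right j) (H × H) :=
    fun j => Coalgebra.Repr.arbitrary k (rt.right j) with hrr
  set ψ : ra.ι → (H ⊗[k] (H ⊗[k] H)) →ₗ[k] H := fun i =>
    (TensorProduct.lid k H).toLinearMap ∘ₗ
      TensorProduct.map (f ∘ₗ LinearMap.mulLeft k (ra.left i))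
        (LinearMap.mulLeft k (ra.right i) ∘ₗ LinearMap.mul' k H ∘ₗ
          TensorProduct.map LinearMap.id (antipode (R := k))) with hψdef
  have hψ : ∀ (i : ra.ι) (p q r : H), ψ i (p ⊗ₜ[k] (q ⊗ₜ[k] r))
      = f (ra.left i * p) • (ra.right i * (q * antipode (R := k) r)) := by
    intro i p q r
    simp [hψdef]
  have key := Coalgebra.sum_tmul_tmul_eq rt rl rr
  have swap : ∀ i : ra.ι,
      (∑ j ∈ rt.index, ∑ l ∈ (rl j).index,
        f (ra.left i * (rl j).left l) •
          (ra.right i * ((rl j).right l * antipode (R := k) (rt.right j))))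
      = ∑ j ∈ rt.index, ∑ l ∈ (rr j).index,
        f (ra.left i * rt.left j) •
          (ra.right i * ((rr j).left l * antipode (R := k) ((rr j).right l))) := by
    intro i
    have h := congrArg (ψ i) key
    rw [map_sum, map_sum] at h
    simp only [map_sum, hψ] at h
    exact h
  have hX : (∑ i ∈ ra.index, ∑ j ∈ rt.index, ∑ l ∈ (rr j).index,
      f (ra.left i * rt.left j) •
        (ra.right i * ((rr j).left l * antipode (R := k) ((rr j).right l)))) = a := by
    have step1 : ∀ (i : ra.ι) (j : rt.ι),
        (∑ l ∈ (rr j).index, f (ra.left i * rt.left j) •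
          (ra.right i * ((rr j).left l * antipode (R := k) ((rr j).right l))))
        = (Coalgebra.counit (R := k) (rt.right j) * f (ra.left i * rt.left j)) •
            ra.right i := by
      intro i j
      rw [← Finset.smul_sum, ← Finset.mul_sum, HopfAlgebra.sum_mul_antipode_eq_smul (rr j)]
      rw [mul_smul_comm, mul_one, smul_smul, mul_comm]
    calc (∑ i ∈ ra.index, ∑ j ∈ rt.index, ∑ l ∈ (rr j).index,
        f (ra.left i * rt.left j) •
          (ra.right i * ((rr j).left l * antipode (R := k) ((rr j).right l))))
        = ∑ i ∈ ra.index, ∑ j ∈ rt.index,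
            (Coalgebra.counit (R := k) (rt.right j) * f (ra.left i * rt.left j)) •
              ra.right i := by
          refine Finset.sum_congr rfl fun i _ => Finset.sum_congr rfl fun j _ => step1 i j
      _ = ∑ i ∈ ra.index, (∑ j ∈ rt.index,
            Coalgebra.counit (R := k) (rt.right j) * f (ra.left i * rt.left j)) •
              ra.right i := by
          refine Finset.sum_congr rfl fun i _ => ?_
          rw [Finset.sum_smul]
      _ = ∑ i ∈ ra.index, Coalgebra.counit (R := k) (ra.left i) • ra.right i := by
          refine Finset.sum_congr rfl fun i _ => ?_
          congr 1
          have h10 : ∑ j ∈ rt.index, Coalgebra.counit (R := k) (rt.right j) *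
              f (ra.left i * rt.left j)
              = f (ra.left i * ∑ j ∈ rt.index,
                  Coalgebra.counit (R := k) (rt.right j) • rt.left j) := by
            rw [Finset.mul_sum, map_sum]
            refine Finset.sum_congr rfl fun j _ => ?_
            rw [mul_smul_comm, map_smul, smul_eq_mul]
          rw [h10, sum_counit_smul_left rt, hft]
      _ = a := sum_counit_smul_right ra
  have hX' : (∑ i ∈ ra.index, ∑ j ∈ rt.index, ∑ l ∈ (rl j).index,
      f (ra.left i * (rl j).left l) •
        (ra.right i * ((rl j).right l * antipode (R := k) (rt.right j))))
      = ∑ j ∈ rt.index, f (a * rt.left j) • antipode (R := k) (rt.right j) := by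
    rw [Finset.sum_comm]
    refine Finset.sum_congr rfl fun j _ => ?_
    have reassoc : ∀ (i : ra.ι) (l : (rl j).ι),
        f (ra.left i * (rl j).left l) •
          (ra.right i * ((rl j).right l * antipode (R := k) (rt.right j)))
        = (f (ra.left i * (rl j).left l) • (ra.right i * (rl j).right l)) *
            antipode (R := k) (rt.right j) := by
      intro i l
      rw [smul_mul_assoc, mul_assoc]
    calc (∑ i ∈ ra.index, ∑ l ∈ (rl j).index,
        f (ra.left i * (rl j).left l) •
          (ra.right i * ((rl j).right l * antipode (R := k) (rt.right j))))
        = (∑ i ∈ ra.index, ∑ l ∈ (rl j).index,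
            f (ra.left i * (rl j).left l) • (ra.right i * (rl j).right l)) *
              antipode (R := k) (rt.right j) := by
          rw [Finset.sum_mul]
          refine Finset.sum_congr rfl fun i _ => ?_
          rw [Finset.sum_mul]
          exact Finset.sum_congr rfl fun l _ => reassoc i l
      _ = (f (a * rt.left j) • 1) * antipode (R := k) (rt.right j) := by
          rw [base2 f hri ra (rl j)]
      _ = f (a * rt.left j) • antipode (R := k) (rt.right j) := by
          rw [smul_mul_assoc, one_mul]
  exact hX'.symm.trans ((Finset.sum_congr rfl fun i _ => swap i).trans hX)

variable (hsys : ∀ a : H, (∑ i, f (y i * a) • x i = a) ∧ (∑ i, f (a * x i) • y i = a))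

include hsys in
lemma nd_right (z w : H) (h : ∀ c : H, f (c * z) = f (c * w)) : z = w := by
  have hz := (hsys z).1
  have hw := (hsys w).1
  rw [← hz, ← hw]
  exact Finset.sum_congr rfl fun i _ => by rw [h (y i)]

section withT
variable {t : H} {ι : Type*} (rt : Coalgebra.Repr k t ι)
variable (hft : ∀ c : H, f (c * t) = Coalgebra.counit (R := k) c)
variable (hint : ∀ a : H, t * a = Coalgebra.counit (R := k) a • t)
variable (d4 : ∀ a : H,
  ∑ j ∈ rt.index, f (a * rt.left j) • antipode (R := k) (rt.right j) = a)

include hsys d4 in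
lemma z_eq_one :
    (∑ j ∈ rt.index, f (antipode (R := k) (rt.right j)) • rt.left j) = 1 := by
  apply nd_right f x y hsys
  intro c
  rw [mul_one, Finset.mul_sum]
  have h1 : ∀ j : rt.ι, c * (f (antipode (R := k) (rt.right j)) • rt.left j)
      = f (antipode (R := k) (rt.right j)) • (c * rt.left j) := fun j => mul_smul_comm _ _ _
  rw [Finset.sum_congr rfl fun j _ => h1 j, map_sum]
  have h2 := congrArg f (d4 c)
  rw [map_sum] at h2
  rw [← h2]
  exact Finset.sum_congr rfl fun j _ => by
    rw [map_smul, map_smul, smul_eq_mul, smul_eq_mul, mul_comm]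

include hsys d4 hft hint in
lemma coreD (a b : H) :
    f (antipode (R := k) (antipode (R := k) b) * a) = f (a * b) := by
  classical
  set S : H →ₗ[k] H := antipode (R := k) with hS
  set χ : H ⊗[k] H →ₗ[k] k :=
    LinearMap.mul' k k ∘ₗ
      TensorProduct.map (f ∘ₗ LinearMap.mulLeft k a) (f ∘ₗ S) with hχ
  have hχap : ∀ p q : H, χ (p ⊗ₜ[k] q) = f (a * p) * f (S q) := by
    intro p q; simp [hχ]
  have E1 : χ (Coalgebra.comul (R := k) t * ((1 : H) ⊗ₜ[k] S b)) = f (S (S b) * a) := by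
    rw [← rt.eq, Finset.sum_mul, map_sum]
    have h1 : ∀ j : rt.ι, χ ((rt.left j ⊗ₜ[k] rt.right j) * ((1 : H) ⊗ₜ[k] S b))
        = f (a * rt.left j) * f (S (rt.right j * S b)) := by
      intro j
      rw [Algebra.TensorProduct.tmul_mul_tmul, mul_one, hχap]
    rw [Finset.sum_congr rfl fun j _ => h1 j]
    conv_rhs => rw [← d4 a]
    rw [Finset.mul_sum, map_sum]
    refine Finset.sum_congr rfl fun j _ => ?_
    rw [mul_smul_comm, map_smul, smul_eq_mul, antipode_mul']
  have E2 : χ (Coalgebra.comul (R := k) t * (b ⊗ₜ[k] (1 : H))) = f (a * b) := by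
    rw [← rt.eq, Finset.sum_mul, map_sum]
    have h1 : ∀ j : rt.ι, χ ((rt.left j ⊗ₜ[k] rt.right j) * (b ⊗ₜ[k] (1 : H)))
        = f (a * (rt.left j * b)) * f (S (rt.right j)) := by
      intro j
      rw [Algebra.TensorProduct.tmul_mul_tmul, mul_one, hχap]
    rw [Finset.sum_congr rfl fun j _ => h1 j]
    have h2 : ∀ j : rt.ι, f (a * (rt.left j * b)) * f (S (rt.right j))
        = f (f (S (rt.right j)) • (a * (rt.left j * b))) := by
      intro j
      rw [map_smul, smul_eq_mul, mul_comm]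
    rw [Finset.sum_congr rfl fun j _ => h2 j, ← map_sum]
    have h3 : (∑ j ∈ rt.index, f (S (rt.right j)) • (a * (rt.left j * b)))
        = a * ((∑ j ∈ rt.index, f (S (rt.right j)) • rt.left j) * b) := by
      rw [Finset.sum_mul, Finset.mul_sum]
      refine Finset.sum_congr rfl fun j _ => ?_
      rw [smul_mul_assoc, mul_smul_comm]
    rw [h3, z_eq_one f x y hsys rt d4, one_mul]
  rw [← E1, ← E2, rtR hint b]

end withT
end
end Stmt19Aux

open Stmt19Aux HopfAlgebra in
/-- If `H'` is a unimodular almost cocommutative FH-algebra over a commutative ring `k`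
(the set of right integrals equals the set of left integrals, and there is an invertible
`R ∈ H' ⊗ H'` with `R Δ(a) R⁻¹ = Δᵒᵖ(a)` for all `a`), then `H'` is a symmetric algebra:
it admits a Frobenius homomorphism which is a trace. -/
theorem stmt_19 (k : Type*) [CommRing k] (H : Type*) [Ring H] [HopfAlgebra k H]
    (hfin : Module.Finite k H) (hproj : Module.Projective k H)
    (f : H →ₗ[k] k) (nn : ℕ) (x y : Fin nn → H) (hsys : IsFrobeniusSystem k H f x y)
    (hri : ∀ a : H,
      (TensorProduct.lid k H) ((TensorProduct.map f LinearMap.id) (Coalgebra.comul (R := k) a))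
        = f a • (1 : H))
    (huni : {t : H | ∀ a : H, t * a = Coalgebra.counit (R := k) a • t}
          = {t : H | ∀ a : H, a * t = Coalgebra.counit (R := k) a • t})
    (R Rinv : H ⊗[k] H) (hR1 : R * Rinv = 1) (hR2 : Rinv * R = 1)
    (hR : ∀ a : H, R * Coalgebra.comul (R := k) a * Rinv
        = (TensorProduct.comm k H H) (Coalgebra.comul (R := k) a)) :
    ∃ (φ : H →ₗ[k] k) (m : ℕ) (u v : Fin m → H),
      IsFrobeniusSystem k H φ u v ∧ ∀ a b : H, φ (a * b) = φ (b * a) := by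
  classical
  haveI := hfin
  have hsys' : ∀ a : H, (∑ i, f (y i * a) • x i = a) ∧ (∑ i, f (a * x i) • y i = a) := hsys
  -- the distinguished integral t
  set t : H := ∑ i, Coalgebra.counit (R := k) (y i) • x i with ht
  have hft : ∀ c : H, f (c * t) = Coalgebra.counit (R := k) c := by
    intro c
    rw [ht, Finset.mul_sum, map_sum]
    have h2 := congrArg (Coalgebra.counit (R := k)) ((hsys' c).2)
    rw [map_sum] at h2
    rw [← h2]
    refine Finset.sum_congr rfl fun i _ => ?_
    rw [mul_smul_comm, map_smul, map_smul, smul_eq_mul, smul_eq_mul, mul_comm]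
  have hleft : ∀ a : H, a * t = Coalgebra.counit (R := k) a • t := by
    intro a
    apply nd_right f x y hsys'
    intro c
    rw [← mul_assoc, hft (c * a), mul_smul_comm, map_smul, hft c, smul_eq_mul,
      Bialgebra.counit_mul, mul_comm]
  have hint : ∀ a : H, t * a = Coalgebra.counit (R := k) a • t := by
    have hmem : t ∈ {s : H | ∀ a : H, a * s = Coalgebra.counit (R := k) a • s} :=
      fun a => hleft a
    rw [← huni] at hmem
    exact hmem
  set rt := Coalgebra.Repr.arbitrary k t with hrt
  have d4 := dag4 f hri hft rt
  have core := coreD f x y hsys' rt hft hint d4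
  -- the Drinfeld element
  set u : H := theta R with hu
  have ulem := ulemma R Rinv hR2 hR
  -- the antipode is bijective
  have hSsurj : Function.Surjective (antipode (R := k) (A := H)) := by
    intro a
    refine ⟨∑ j ∈ rt.index, f (a * rt.left j) • rt.right j, ?_⟩
    rw [map_sum]
    simp only [map_smul]
    exact d4 a
  have hSinj : Function.Injective (antipode (R := k) (A := H)) :=
    OrzechProperty.injective_of_surjective_endomorphism _ hSsurj
  set e : H ≃ₗ[k] H := LinearEquiv.ofBijective _ ⟨hSinj, hSsurj⟩ with he
  have heap : ∀ c : H, antipode (R := k) (e.symm c) = c := by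
    intro c
    exact e.apply_symm_apply c
  -- the inverse of u
  set v : H := (LinearMap.mul' k H) ((TensorProduct.map e.symm.toLinearMap LinearMap.id)
    ((TensorProduct.comm k H H) Rinv)) with hv
  have key : ∀ Y : H ⊗[k] H,
      u * ((LinearMap.mul' k H) ((TensorProduct.map e.symm.toLinearMap LinearMap.id)
        ((TensorProduct.comm k H H) Y))) = theta (R * Y) := by
    intro Y
    induction Y using TensorProduct.induction_on with
    | zero => simp
    | tmul p q =>
        rw [TensorProduct.comm_tmul, TensorProduct.map_tmul, LinearMap.mul'_apply,
          LinearEquiv.coe_coe, LinearMap.id_coe, id_eq, L1, ← mul_assoc,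
          ulem (e.symm q), heap q]
    | add Y Z hY hZ =>
        rw [map_add, map_add, map_add, mul_add, mul_add, map_add, hY, hZ]
  have huv : u * v = 1 := by
    have h := key Rinv
    rw [hR1] at h
    rw [hv, h, Algebra.TensorProduct.one_def, theta_tmul, antipode_one', one_mul]
  have hvu : v * u = 1 := by
    have hsurj : Function.Surjective (LinearMap.mulLeft k u) := by
      intro w
      exact ⟨v * w, by rw [LinearMap.mulLeft_apply, ← mul_assoc, huv, one_mul]⟩
    have hinj : Function.Injective (LinearMap.mulLeft k u) :=
      OrzechProperty.injective_of_surjective_endomorphism _ hsurj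
    apply hinj
    rw [LinearMap.mulLeft_apply, LinearMap.mulLeft_apply, ← mul_assoc, huv, one_mul, mul_one]
  -- the symmetric Frobenius homomorphism
  refine ⟨f ∘ₗ LinearMap.mulLeft k u, nn, x, fun i => v * y i, ?_, ?_⟩
  · intro a
    constructor
    · have h1 : ∀ i : Fin nn,
          (f ∘ₗ LinearMap.mulLeft k u) ((v * y i) * a) • x i = f (y i * a) • x i := by
        intro i
        congr 1
        rw [LinearMap.comp_apply, LinearMap.mulLeft_apply, ← mul_assoc, ← mul_assoc,
          huv, one_mul]
      rw [Finset.sum_congr rfl fun i _ => h1 i]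
      exact (hsys' a).1
    · have h1 : ∀ i : Fin nn,
          (f ∘ₗ LinearMap.mulLeft k u) (a * x i) • (v * y i)
            = v * (f ((u * a) * x i) • y i) := by
        intro i
        rw [LinearMap.comp_apply, LinearMap.mulLeft_apply, ← mul_assoc, mul_smul_comm]
      rw [Finset.sum_congr rfl fun i _ => h1 i, ← Finset.mul_sum, (hsys' (u * a)).2,
        ← mul_assoc, hvu, one_mul]
  · intro a b
    show f (u * (a * b)) = f (u * (b * a))
    calc f (u * (a * b)) = f ((u * a) * b) := by rw [mul_assoc]
      _ = f (antipode (R := k) (antipode (R := k) b) * (u * a)) := (core (u * a) b).symm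
      _ = f ((antipode (R := k) (antipode (R := k) b) * u) * a) := by rw [mul_assoc]
      _ = f ((u * b) * a) := by rw [← ulem b]
      _ = f (u * (b * a)) := by rw [mul_assoc]
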